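/- Let g ∈ ℚ[X] be an irreducible polynomial of degree ≥ 2 with Galois group G acting on its set of roots. Then there exists σ ∈ G acting without fixed points on the roots of g. -/

import Mathlib

open Polynomial

/-- Jordan's theorem: a finite group acting transitively on a finite set of
cardinality at least `2` contains an element with no fixed points. -/
theorem jordan_exists_smul_ne {G α : Type*} [Group G] [Fintype G] [MulAction G α]
    [Fintype α] [MulAction.IsPretransitive G α] (h : 2 ≤ Fintype.card α) :
    ∃ g : G, ∀ x : α, g • x ≠ x := by
  classical
  by_contra hc
  push_neg at hc
  -- number of orbits is 1
  have hne : Nonempty α := Fintype.card_pos_iff.mp (by omega)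
  obtain ⟨a⟩ := hne
  have hΩ : Fintype.card (MulAction.orbitRel.Quotient G α) = 1 := by
    rw [Fintype.card_eq_one_iff]
    refine ⟨⟦a⟧, fun b => ?_⟩
    induction b using Quotient.inductionOn with
    | h b =>
      refine Quotient.sound ?_
      obtain ⟨g, hg⟩ := MulAction.exists_smul_eq G a b
      exact ⟨g, hg⟩
  have burn := MulAction.sum_card_fixedBy_eq_card_orbits_mul_card_group G α
  rw [hΩ, one_mul] at burn
  -- identity fixes everything, so its fixed set has card ≥ 2
  obtain ⟨x, y, hxy⟩ := (Fintype.one_lt_card_iff (α := α)).mp (by omega)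
  have h1 : 2 ≤ Fintype.card (MulAction.fixedBy α (1 : G)) := by
    exact Fintype.one_lt_card_iff.mpr
      ⟨⟨x, one_smul G x⟩, ⟨y, one_smul G y⟩, by simpa [Subtype.ext_iff] using hxy⟩
  have hall : ∀ g : G, 1 ≤ Fintype.card (MulAction.fixedBy α g) := by
    intro g
    obtain ⟨z, hz⟩ := hc g
    exact Fintype.card_pos_iff.mpr ⟨⟨z, hz⟩⟩
  have hsum : Fintype.card G + 1 ≤
      ∑ g : G, Fintype.card (MulAction.fixedBy α g) := by
    rw [← Finset.add_sum_erase _ _ (Finset.mem_univ (1 : G))]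
    have h2 : Fintype.card G - 1 ≤
        ∑ g ∈ (Finset.univ : Finset G).erase 1, Fintype.card (MulAction.fixedBy α g) := by
      calc Fintype.card G - 1
          = ((Finset.univ : Finset G).erase 1).card := by
            rw [Finset.card_erase_of_mem (Finset.mem_univ _), Finset.card_univ]
        _ ≤ _ := Finset.card_nsmul_le_sum _ _ 1 (fun g _ => hall g) |>.trans_eq' (by simp)
    have hG : 1 ≤ Fintype.card G := Fintype.card_pos
    omega
  omega

/-- The Galois action on the roots in the splitting field is transitive when the
polynomial is irreducible. -/
theorem galActionAux_pretransitive (g : Polynomial ℚ) (hirr : Irreducible g) :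
    MulAction.IsPretransitive g.Gal (g.rootSet g.SplittingField) := by
  refine ⟨fun x y => ?_⟩
  have hx := minpoly.eq_of_irreducible hirr (Polynomial.mem_rootSet.mp x.2).2
  have hy := minpoly.eq_of_irreducible hirr (Polynomial.mem_rootSet.mp y.2).2
  haveI : Normal ℚ g.SplittingField := Polynomial.SplittingField.instNormal g
  obtain ⟨σ, hσ⟩ := (Normal.minpoly_eq_iff_mem_orbit g.SplittingField).mp (hy.symm.trans hx)
  exact ⟨σ, Subtype.ext hσ⟩

/-- Let `g ∈ ℚ[X]` be irreducible of degree at least `2`. Then there is an element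
of the Galois group of `g` (an automorphism of its splitting field over `ℚ`) acting
without fixed points on the roots of `g`. -/
theorem exists_gal_without_fixed_root (g : Polynomial ℚ) (hirr : Irreducible g)
    (hdeg : 2 ≤ g.natDegree) :
    ∃ σ : g.SplittingField ≃ₐ[ℚ] g.SplittingField,
      ∀ x ∈ g.rootSet g.SplittingField, σ x ≠ x := by
  have hpre := galActionAux_pretransitive g hirr
  have hcard : Fintype.card (g.rootSet g.SplittingField) = g.natDegree :=
    Polynomial.card_rootSet_eq_natDegree hirr.separable
      (Polynomial.SplittingField.splits g)
  obtain ⟨σ, hσ⟩ := jordan_exists_smul_ne (G := g.Gal)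
    (α := g.rootSet g.SplittingField) (hcard ▸ hdeg)
  refine ⟨σ, fun x hx h => ?_⟩
  exact hσ ⟨x, hx⟩ (Subtype.ext h)
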